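/- Let M ∈ ℕ and Λ := {0,1,…,M} ⊂ ℤ. For ζ : Λ → ℤ and x ∈ Λ let ζ + δ_x (respectively ζ − δ_x) denote the function obtained by adding (respectively subtracting) 1 at the coordinate x. For ξ, ζ : Λ → ℤ set 𝔇(ξ,ζ) := ∏_{x∈Λ} D^N_{ξ(x)}(ζ(x)) ∈ ℚ, and for f : ℤ^Λ → ℚ and ζ : Λ → ℕ₀ define the reflected nearest-neighbour migration generator (𝓛_m f)(ζ) := ∑_{x∈Λ} ∑_{z∈{−1,1} with x+z∈Λ} ζ(x)·(f(ζ + δ_{x+z} − δ_x) − f(ζ)). Then for all ξ, ζ : Λ → ℕ₀ one has (𝓛_m 𝔇(ξ,·))(ζ) = (𝓛_m 𝔇(·,ζ))(ξ). -/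

import Mathlib

namespace MigrationDuality

/-- The descending factorial `i (i−1) ⋯ (i−j+1)` of an integer `i`. -/
def dfac (i : ℤ) (j : ℕ) : ℤ := ∏ t ∈ Finset.range j, (i - (t : ℤ))

/-- The scaled Poisson polynomial `D^N_j(i)`: equal to `1` if `j ≤ 0` or `i < 0`, and to
`i (i−1) ⋯ (i−j+1) / N^j` otherwise. -/
noncomputable def DN (N : ℕ) (j i : ℤ) : ℚ :=
  if j ≤ 0 ∨ i < 0 then 1 else (dfac i j.toNat : ℚ) / (N : ℚ) ^ j.toNat

/-- `ζ + δ_y − δ_x`: move one particle from `x` to `y`. -/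
def move (ζ : ℤ → ℤ) (x y : ℤ) : ℤ → ℤ :=
  fun t => ζ t + (if t = y then 1 else 0) - (if t = x then 1 else 0)

/-- The duality function `𝔇(ξ,ζ) = ∏_{x∈Λ} D^N_{ξ(x)}(ζ(x))` on the box `Λ = {0,…,M}`. -/
noncomputable def Dprod (N : ℕ) (M : ℕ) (ξ ζ : ℤ → ℤ) : ℚ :=
  ∏ x ∈ Finset.Icc (0 : ℤ) (M : ℤ), DN N (ξ x) (ζ x)

/-- The reflected nearest-neighbour migration generator on the box `Λ = {0,…,M}`. -/
noncomputable def genM (M : ℕ) (f : (ℤ → ℤ) → ℚ) (ζ : ℤ → ℤ) : ℚ :=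
  ∑ x ∈ Finset.Icc (0 : ℤ) (M : ℤ), ∑ z ∈ ({-1, 1} : Finset ℤ),
    if x + z ∈ Finset.Icc (0 : ℤ) (M : ℤ) then (ζ x : ℚ) * (f (move ζ x (x + z)) - f ζ)
    else 0

/-! ### Auxiliary lemmas on the descending factorial -/

lemma dfac_succ (i : ℤ) (k : ℕ) : dfac i (k+1) = dfac i k * (i - k) :=
  Finset.prod_range_succ _ _

lemma dfac_shift (i : ℤ) (k : ℕ) : dfac i (k+1) = i * dfac (i-1) k := by
  rw [dfac, Finset.prod_range_succ', dfac, mul_comm]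
  congr 1
  · simp
  · exact Finset.prod_congr rfl fun t _ => by push_cast; ring

lemma dfac_shift' (i : ℤ) (k : ℕ) : dfac (i+1) (k+1) = (i+1) * dfac i k := by
  rw [dfac_shift]; simp

lemma dfac_zero_left (k : ℕ) (hk : 1 ≤ k) : dfac 0 k = 0 := by
  obtain ⟨m, rfl⟩ := Nat.exists_eq_add_of_le hk
  rw [show 1 + m = m + 1 by ring, dfac_shift]; ring

/-! ### Auxiliary lemmas on the scaled Poisson polynomials -/

lemma DN_nonpos (N : ℕ) {j : ℤ} (i : ℤ) (hj : j ≤ 0) : DN N j i = 1 := by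
  simp [DN, hj]

lemma DN_eq (N : ℕ) {j i : ℤ} (hj : 0 ≤ j) (hi : 0 ≤ i) :
    DN N j i = (dfac i j.toNat : ℚ) / (N : ℚ) ^ j.toNat := by
  rcases eq_or_lt_of_le hj with h | h
  · rw [DN_nonpos N i h.symm.le, ← h]
    simp [dfac]
  · rw [DN, if_neg]
    push_neg
    exact ⟨h, hi⟩

lemma DN_zero_right {N : ℕ} {c : ℤ} (hc : 0 < c) : DN N c 0 = 0 := by
  rw [DN_eq N hc.le le_rfl, dfac_zero_left c.toNat (by omega)]
  simp

section Steps

variable {N : ℕ} (hN : (N : ℚ) ≠ 0)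
include hN

lemma step1 {c i : ℤ} (hc : 0 ≤ c) (hi : 0 ≤ i) :
    (N : ℚ) * DN N (c+1) i = ((i - c : ℤ) : ℚ) * DN N c i := by
  rw [DN_eq N (by linarith) hi, DN_eq N hc hi,
    show (c+1).toNat = c.toNat + 1 by omega, dfac_succ,
    show ((c.toNat : ℤ)) = c from Int.toNat_of_nonneg hc]
  push_cast
  field_simp
  ring

lemma step2 {c i : ℤ} (hc : 0 ≤ c) (hi : 0 ≤ i) :
    (N : ℚ) * DN N (c+1) (i+1) = ((i + 1 : ℤ) : ℚ) * DN N c i := by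
  rw [DN_eq N (by linarith) (by linarith), DN_eq N hc hi,
    show (c+1).toNat = c.toNat + 1 by omega, dfac_shift']
  push_cast
  field_simp
  ring

lemma step3 {c i : ℤ} (hc : 0 ≤ c) (hi : 0 ≤ i) :
    (i : ℚ) * ((N : ℚ) * DN N (c+1) (i-1)) =
      (((i - c - 1) * (i - c) : ℤ) : ℚ) * DN N c i := by
  rcases eq_or_lt_of_le hi with h | h
  · rw [← h]
    rcases eq_or_lt_of_le hc with h2 | h2
    · rw [← h2]; simp
    · rw [DN_zero_right h2]
      simp
  · have h1 : 0 ≤ i - 1 := by omega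
    rw [DN_eq N (by linarith) h1, DN_eq N hc hi,
      show (c+1).toNat = c.toNat + 1 by omega]
    have key : i * dfac (i-1) (c.toNat+1) = (i - c - 1) * (i - c) * dfac i c.toNat := by
      rw [← dfac_shift, dfac_succ, dfac_succ]
      push_cast [Int.toNat_of_nonneg hc]
      ring
    have key2 : ((i : ℚ)) * (dfac (i-1) (c.toNat+1) : ℚ) =
        (((i - c - 1) * (i - c) : ℤ) : ℚ) * (dfac i c.toNat : ℚ) := by
      exact_mod_cast congrArg (fun z : ℤ => (z : ℚ)) key
    rw [pow_succ]
    field_simp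
    push_cast at key2 ⊢
    linear_combination key2

lemma step4 {c i : ℤ} (hc : 0 ≤ c) (hi : 0 ≤ i) :
    (N : ℚ)^2 * DN N (c+1+1) i = (((i - c - 1) * (i - c) : ℤ) : ℚ) * DN N c i := by
  have h1 := step1 hN (by linarith : (0:ℤ) ≤ c + 1) hi
  have h2 := step1 hN hc hi
  push_cast at h1 h2 ⊢
  linear_combination (N:ℚ) * h1 + ((i:ℚ) - c - 1) * h2

/-! ### The one-edge (two-site) duality identity -/

lemma keyid {a b i j : ℤ}
    (ha : 0 ≤ a) (hb : 0 ≤ b) (hi : 0 ≤ i) (hj : 0 ≤ j) :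
    (i : ℚ) * (DN N a (i-1) * DN N b (j+1)) + (j : ℚ) * (DN N a (i+1) * DN N b (j-1))
      - ((i : ℚ) + (j : ℚ)) * (DN N a i * DN N b j)
    = (a : ℚ) * (DN N (a-1) i * DN N (b+1) j) + (b : ℚ) * (DN N (a+1) i * DN N (b-1) j)
      - ((a : ℚ) + (b : ℚ)) * (DN N a i * DN N b j) := by
  rcases eq_or_lt_of_le ha with ha0 | ha1 <;> rcases eq_or_lt_of_le hb with hb0 | hb1
  · -- a = 0, b = 0
    rw [← ha0, ← hb0]
    simp [DN_nonpos N _ (le_refl (0:ℤ))]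
  · -- a = 0, b ≥ 1
    rw [← ha0]
    obtain ⟨d, hd, rfl⟩ : ∃ d, 0 ≤ d ∧ b = d + 1 := ⟨b - 1, by omega, by ring⟩
    rw [show d + 1 - 1 = d from add_sub_cancel_right d 1]
    have k1 := step1 hN hd hj
    have k2 := step2 hN hd hj
    have k3 := step3 hN hd hj
    have e := step1 hN (le_refl (0:ℤ)) hi
    rw [DN_nonpos N i (le_refl (0:ℤ))] at e
    simp only [DN_nonpos N _ (le_refl (0:ℤ)), Int.cast_zero, zero_mul, zero_add, mul_one,
      one_mul] at *
    refine mul_left_cancel₀ hN ?_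
    push_cast at k1 k2 k3 e ⊢
    linear_combination (i:ℚ) * k2 + k3 + ((d:ℚ)+1-i-j) * k1 - ((d:ℚ)+1) * DN N d j * e
  · -- a ≥ 1, b = 0
    rw [← hb0]
    obtain ⟨c, hc, rfl⟩ : ∃ c, 0 ≤ c ∧ a = c + 1 := ⟨a - 1, by omega, by ring⟩
    rw [show c + 1 - 1 = c from add_sub_cancel_right c 1]
    have h1 := step1 hN hc hi
    have h2 := step2 hN hc hi
    have h3 := step3 hN hc hi
    have e := step1 hN (le_refl (0:ℤ)) hj
    rw [DN_nonpos N j (le_refl (0:ℤ))] at e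
    simp only [DN_nonpos N _ (le_refl (0:ℤ)), Int.cast_zero, zero_mul, zero_add, add_zero,
      mul_one, one_mul] at *
    refine mul_left_cancel₀ hN ?_
    push_cast at h1 h2 h3 e ⊢
    linear_combination (j:ℚ) * h2 + h3 + ((c:ℚ)+1-i-j) * h1 - ((c:ℚ)+1) * DN N c i * e
  · -- a ≥ 1, b ≥ 1
    obtain ⟨c, hc, rfl⟩ : ∃ c, 0 ≤ c ∧ a = c + 1 := ⟨a - 1, by omega, by ring⟩
    obtain ⟨d, hd, rfl⟩ : ∃ d, 0 ≤ d ∧ b = d + 1 := ⟨b - 1, by omega, by ring⟩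
    rw [show c + 1 - 1 = c from add_sub_cancel_right c 1,
      show d + 1 - 1 = d from add_sub_cancel_right d 1]
    have h1 := step1 hN hc hi
    have h2 := step2 hN hc hi
    have h3 := step3 hN hc hi
    have h4 := step4 hN hc hi
    have k1 := step1 hN hd hj
    have k2 := step2 hN hd hj
    have k3 := step3 hN hd hj
    have k4 := step4 hN hd hj
    refine mul_left_cancel₀ (pow_ne_zero 2 hN) ?_
    push_cast at h1 h2 h3 h4 k1 k2 k3 k4 ⊢
    linear_combination ((N:ℚ) * DN N (d+1) (j+1)) * h3
      + (((i:ℚ)-c-1)*((i:ℚ)-c) * DN N c i) * k2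
      + ((N:ℚ) * DN N (c+1) (i+1)) * k3
      + (((j:ℚ)-d-1)*((j:ℚ)-d) * DN N d j) * h2
      + (((c:ℚ)+d+2-i-j) * N * DN N (d+1) j) * h1
      + (((c:ℚ)+d+2-i-j)*((i:ℚ)-c) * DN N c i) * k1
      - ((c:ℚ)+1) * DN N c i * k4
      - ((d:ℚ)+1) * DN N d j * h4

/-! ### The edge lemma for the full duality function -/

lemma edge (M : ℕ) (ξ ζ : ℤ → ℤ)
    (hξ : ∀ x, 0 ≤ ξ x) (hζ : ∀ x, 0 ≤ ζ x) (x y : ℤ)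
    (hx : x ∈ Finset.Icc (0:ℤ) (M:ℤ)) (hy : y ∈ Finset.Icc (0:ℤ) (M:ℤ)) (hxy : x ≠ y) :
    (ζ x : ℚ) * (Dprod N M ξ (move ζ x y) - Dprod N M ξ ζ)
      + (ζ y : ℚ) * (Dprod N M ξ (move ζ y x) - Dprod N M ξ ζ)
    = (ξ x : ℚ) * (Dprod N M (move ξ x y) ζ - Dprod N M ξ ζ)
      + (ξ y : ℚ) * (Dprod N M (move ξ y x) ζ - Dprod N M ξ ζ) := by
  classical
  set s : Finset ℤ := Finset.Icc (0:ℤ) (M:ℤ) with hs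
  have hy' : y ∈ s.erase x := Finset.mem_erase.2 ⟨Ne.symm hxy, hy⟩
  have split : ∀ f : ℤ → ℚ, ∏ u ∈ s, f u = f x * (f y * ∏ u ∈ (s.erase x).erase y, f u) := by
    intro f
    rw [← Finset.mul_prod_erase s f hx, ← Finset.mul_prod_erase (s.erase x) f hy']
  set P : ℚ := ∏ u ∈ (s.erase x).erase y, DN N (ξ u) (ζ u) with hP
  have hoff : ∀ u ∈ (s.erase x).erase y, u ≠ x ∧ u ≠ y := by
    intro u hu
    exact ⟨(Finset.mem_erase.1 (Finset.mem_erase.1 hu).2).1, (Finset.mem_erase.1 hu).1⟩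
  have m1 : move ζ x y x = ζ x - 1 := by simp [move, hxy]
  have m2 : move ζ x y y = ζ y + 1 := by simp [move, Ne.symm hxy]
  have m3 : move ζ y x x = ζ x + 1 := by simp [move, hxy]
  have m4 : move ζ y x y = ζ y - 1 := by simp [move, Ne.symm hxy]
  have n1 : move ξ x y x = ξ x - 1 := by simp [move, hxy]
  have n2 : move ξ x y y = ξ y + 1 := by simp [move, Ne.symm hxy]
  have n3 : move ξ y x x = ξ x + 1 := by simp [move, hxy]
  have n4 : move ξ y x y = ξ y - 1 := by simp [move, Ne.symm hxy]
  have moff : ∀ (ρ : ℤ → ℤ) (w v : ℤ), ∀ u, u ≠ w → u ≠ v → move ρ w v u = ρ u := by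
    intro ρ w v u h1 h2
    simp [move, h1, h2]
  have e0 : Dprod N M ξ ζ = DN N (ξ x) (ζ x) * (DN N (ξ y) (ζ y) * P) := by
    rw [Dprod, ← hs, split]
  have e1 : Dprod N M ξ (move ζ x y) = DN N (ξ x) (ζ x - 1) * (DN N (ξ y) (ζ y + 1) * P) := by
    rw [Dprod, ← hs, split, m1, m2]
    congr 1; congr 1
    exact Finset.prod_congr rfl fun u hu => by rw [moff ζ x y u (hoff u hu).1 (hoff u hu).2]
  have e2 : Dprod N M ξ (move ζ y x) = DN N (ξ x) (ζ x + 1) * (DN N (ξ y) (ζ y - 1) * P) := by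
    rw [Dprod, ← hs, split, m3, m4]
    congr 1; congr 1
    exact Finset.prod_congr rfl fun u hu => by rw [moff ζ y x u (hoff u hu).2 (hoff u hu).1]
  have f1 : Dprod N M (move ξ x y) ζ = DN N (ξ x - 1) (ζ x) * (DN N (ξ y + 1) (ζ y) * P) := by
    rw [Dprod, ← hs, split, n1, n2]
    congr 1; congr 1
    exact Finset.prod_congr rfl fun u hu => by rw [moff ξ x y u (hoff u hu).1 (hoff u hu).2]
  have f2 : Dprod N M (move ξ y x) ζ = DN N (ξ x + 1) (ζ x) * (DN N (ξ y - 1) (ζ y) * P) := by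
    rw [Dprod, ← hs, split, n3, n4]
    congr 1; congr 1
    exact Finset.prod_congr rfl fun u hu => by rw [moff ξ y x u (hoff u hu).2 (hoff u hu).1]
  rw [e0, e1, e2, f1, f2]
  linear_combination P * keyid hN (hξ x) (hξ y) (hζ x) (hζ y)

end Steps

/-- Self-duality of the reflected migration generator acting on scaled
Poisson polynomials: `(𝓛_m 𝔇(ξ,·))(ζ) = (𝓛_m 𝔇(·,ζ))(ξ)` for all `ξ, ζ : Λ → ℕ₀`. -/
theorem statement10 (N : ℕ) (hN : 1 ≤ N) (M : ℕ) (ξ ζ : ℤ → ℤ)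
    (hξ : ∀ x, 0 ≤ ξ x) (hζ : ∀ x, 0 ≤ ζ x) :
    genM M (fun ρ => Dprod N M ξ ρ) ζ = genM M (fun ρ => Dprod N M ρ ζ) ξ := by
  classical
  have hN0 : (N : ℚ) ≠ 0 := Nat.cast_ne_zero.2 (by omega)
  set s : Finset ℤ := Finset.Icc (0:ℤ) (M:ℤ) with hs
  set T : Finset (ℤ × ℤ) :=
    (s ×ˢ ({-1, 1} : Finset ℤ)).filter (fun p => p.1 + p.2 ∈ s) with hT
  have hgen : ∀ (f : (ℤ → ℤ) → ℚ) (ρ : ℤ → ℤ), genM M f ρ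
      = ∑ p ∈ T, (ρ p.1 : ℚ) * (f (move ρ p.1 (p.1 + p.2)) - f ρ) := by
    intro f ρ
    rw [hT, Finset.sum_filter, Finset.sum_product]
    rfl
  set σ : ℤ × ℤ → ℤ × ℤ := fun p => (p.1 + p.2, -p.2) with hσ
  have hmemT : ∀ p : ℤ × ℤ, p ∈ T ↔ (p.1 ∈ s ∧ (p.2 = -1 ∨ p.2 = 1)) ∧ p.1 + p.2 ∈ s := by
    intro p
    simp [hT, Finset.mem_filter, Finset.mem_product]
  have hσT : ∀ p ∈ T, σ p ∈ T := by
    intro p hp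
    obtain ⟨⟨h1, h2⟩, h3⟩ := (hmemT p).1 hp
    refine (hmemT (σ p)).2 ⟨⟨h3, ?_⟩, ?_⟩
    · show -p.2 = -1 ∨ -p.2 = 1
      omega
    · show p.1 + p.2 + -p.2 ∈ s
      simpa using h1
  have hσσ : ∀ p ∈ T, σ (σ p) = p := by
    intro p _
    simp [hσ]
  have reidx : ∀ g : ℤ × ℤ → ℚ, ∑ p ∈ T, g (σ p) = ∑ p ∈ T, g p :=
    fun g => Finset.sum_nbij' σ σ hσT hσT hσσ hσσ (fun a _ => rfl)
  set F : ℤ × ℤ → ℚ := fun p =>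
    (ζ p.1 : ℚ) * (Dprod N M ξ (move ζ p.1 (p.1 + p.2)) - Dprod N M ξ ζ) with hF
  set G : ℤ × ℤ → ℚ := fun p =>
    (ξ p.1 : ℚ) * (Dprod N M (move ξ p.1 (p.1 + p.2)) ζ - Dprod N M ξ ζ) with hG
  have hL : genM M (fun ρ => Dprod N M ξ ρ) ζ = ∑ p ∈ T, F p := hgen _ ζ
  have hR : genM M (fun ρ => Dprod N M ρ ζ) ξ = ∑ p ∈ T, G p := hgen _ ξ
  have main : ∀ p ∈ T, F p + F (σ p) = G p + G (σ p) := by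
    intro p hp
    obtain ⟨⟨h1, h2⟩, h3⟩ := (hmemT p).1 hp
    have hxy : p.1 ≠ p.1 + p.2 := by omega
    have := edge hN0 M ξ ζ hξ hζ p.1 (p.1 + p.2) h1 h3 hxy
    simp only [hF, hG, hσ, add_neg_cancel_right]
    exact this
  have htwo : (2 : ℚ) * ∑ p ∈ T, F p = (2 : ℚ) * ∑ p ∈ T, G p := by
    have h1 : ∑ p ∈ T, (F p + F (σ p)) = ∑ p ∈ T, (G p + G (σ p)) :=
      Finset.sum_congr rfl main
    rw [Finset.sum_add_distrib, Finset.sum_add_distrib, reidx F, reidx G] at h1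
    linarith
  rw [hL, hR]
  exact mul_left_cancel₀ (two_ne_zero (α := ℚ)) htwo

end MigrationDuality
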